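/- Let K ⊆ ℝ^d be a compact set with |K| > 0, let {B_j}_{j≥0} be a hierarchical partition of K, and let J ≥ 0 be an integer. Define the cut-off system X({B_j}_{j=0}^J) = {φ_0} ∪ ∪_{j=0}^{J−1} ∪_{B∈B_j} Ψ_{j,B}. Then X({B_j}_{j=0}^J) is a tight frame (with frame constant 1) for V_J = span{χ_B : B ∈ B_J}: for every f ∈ V_J, ‖f‖² = |⟨f, φ_0⟩|² + Σ_{j=0}^{J−1} Σ_{B∈B_j} Σ_{1≤ℓ_1<ℓ_2≤c_B} |⟨f, ψ_{j,B}^{(ℓ_1,ℓ_2)}⟩|². -/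

import Mathlib

open MeasureTheory Filter

/-- A hierarchical partition of a set `K`. -/
structure HierarchicalPartition (X : Type*) [MeasureSpace X] [PseudoEMetricSpace X]
    (K : Set X) where
  part : ℕ → Finset (Set X)
  root : part 0 = {K}
  cover : ∀ j : ℕ, ⋃ B ∈ part j, B = K
  measurableSet : ∀ j : ℕ, ∀ B ∈ part j, MeasurableSet B
  pos : ∀ j : ℕ, ∀ B ∈ part j, 0 < volume B
  null_inter : ∀ j : ℕ, ∀ B ∈ part j, ∀ B' ∈ part j, B ≠ B' → volume (B ∩ B') = 0
  numChild : ℕ → Set X → ℕ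
  child : ℕ → Set X → ℕ → Set X
  one_le_numChild : ∀ j : ℕ, ∀ B ∈ part j, 1 ≤ numChild j B
  child_mem : ∀ j : ℕ, ∀ B ∈ part j, ∀ ℓ < numChild j B, child j B ℓ ∈ part (j + 1)
  child_ne : ∀ j : ℕ, ∀ B ∈ part j, ∀ ℓ₁ < numChild j B, ∀ ℓ₂ < numChild j B,
    ℓ₁ ≠ ℓ₂ → child j B ℓ₁ ≠ child j B ℓ₂
  child_union : ∀ j : ℕ, ∀ B ∈ part j, B = ⋃ ℓ ∈ Finset.range (numChild j B), child j B ℓ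
  density : Tendsto (fun j : ℕ => (part j).sup fun B => EMetric.diam B) atTop (nhds 0)

/-- `γ_C = χ_C / √|C|`. -/
noncomputable def gammaFn {X : Type*} [MeasureSpace X] (C : Set X) : X → ℝ :=
  C.indicator fun _ => (Real.sqrt (volume C).toReal)⁻¹

/-- `ψ^{(C,C')} = √(|C'|/|B|) γ_C − √(|C|/|B|) γ_{C'}` for sub-blocks `C, C'` of `B`. -/
noncomputable def psiFn {X : Type*} [MeasureSpace X] (B C C' : Set X) : X → ℝ :=
  fun x =>
    Real.sqrt ((volume C').toReal / (volume B).toReal) * gammaFn C x -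
      Real.sqrt ((volume C).toReal / (volume B).toReal) * gammaFn C' x

/-- `V_J = span{χ_B : B ∈ B_J}`, viewed inside `L²(K)`. -/
noncomputable def Vspace {X : Type*} [MeasureSpace X] [PseudoEMetricSpace X] {K : Set X}
    (P : HierarchicalPartition X K) (j : ℕ) :
    Submodule ℝ (Lp ℝ 2 (volume.restrict K)) :=
  Submodule.span ℝ
    {g : Lp ℝ 2 (volume.restrict K) |
      ∃ B ∈ P.part j, (g : X → ℝ) =ᵐ[volume.restrict K] B.indicator fun _ => (1 : ℝ)}

/-! ### Auxiliary algebraic lemmas -/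

lemma lagrange_identity (n : ℕ) (v u : ℕ → ℝ) :
    ∑ ℓ₂ ∈ Finset.range n, ∑ ℓ₁ ∈ Finset.range ℓ₂, (v ℓ₂ * u ℓ₁ - v ℓ₁ * u ℓ₂) ^ 2 =
      (∑ ℓ ∈ Finset.range n, (v ℓ) ^ 2) * (∑ ℓ ∈ Finset.range n, (u ℓ) ^ 2) -
        (∑ ℓ ∈ Finset.range n, v ℓ * u ℓ) ^ 2 := by
  induction n with
  | zero => simp
  | succ n ih =>
    rw [Finset.sum_range_succ, Finset.sum_range_succ (fun ℓ => (v ℓ)^2),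
      Finset.sum_range_succ (fun ℓ => (u ℓ)^2), Finset.sum_range_succ (fun ℓ => v ℓ * u ℓ), ih]
    have : ∑ ℓ₁ ∈ Finset.range n, (v n * u ℓ₁ - v ℓ₁ * u n) ^ 2 =
        (u n)^2 * (∑ ℓ ∈ Finset.range n, (v ℓ)^2) + (v n)^2 * (∑ ℓ ∈ Finset.range n, (u ℓ)^2)
          - 2 * (v n * u n) * (∑ ℓ ∈ Finset.range n, v ℓ * u ℓ) := by
      rw [Finset.mul_sum, Finset.mul_sum, Finset.mul_sum, ← Finset.sum_add_distrib,
        ← Finset.sum_sub_distrib]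
      exact Finset.sum_congr rfl fun ℓ _ => by ring
    rw [this]; ring

lemma block_sum_identity (n : ℕ) (m t : ℕ → ℝ) (M TB : ℝ) (I : ℕ → ℕ → ℝ)
    (hm : ∀ ℓ < n, 0 < m ℓ) (hM : 0 < M)
    (hsm : ∑ ℓ ∈ Finset.range n, m ℓ = M) (hst : ∑ ℓ ∈ Finset.range n, t ℓ = TB)
    (hI : ∀ ℓ₁ ℓ₂, ℓ₁ < ℓ₂ → ℓ₂ < n →
      I ℓ₁ ℓ₂ = Real.sqrt (m ℓ₂ / M) * ((Real.sqrt (m ℓ₁))⁻¹ * t ℓ₁) -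
        Real.sqrt (m ℓ₁ / M) * ((Real.sqrt (m ℓ₂))⁻¹ * t ℓ₂)) :
    ∑ ℓ₂ ∈ Finset.range n, ∑ ℓ₁ ∈ Finset.range ℓ₂, (I ℓ₁ ℓ₂) ^ 2 =
      (∑ ℓ ∈ Finset.range n, (t ℓ) ^ 2 / m ℓ) - TB ^ 2 / M := by
  set v : ℕ → ℝ := fun ℓ => Real.sqrt (m ℓ)
  set u : ℕ → ℝ := fun ℓ => (Real.sqrt (m ℓ))⁻¹ * t ℓ
  have hv2 : ∀ ℓ < n, (v ℓ) ^ 2 = m ℓ := fun ℓ hℓ => Real.sq_sqrt (hm ℓ hℓ).le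
  have hvne : ∀ ℓ < n, v ℓ ≠ 0 := fun ℓ hℓ => Real.sqrt_ne_zero'.2 (hm ℓ hℓ)
  have hvu : ∀ ℓ < n, v ℓ * u ℓ = t ℓ := by
    intro ℓ hℓ; show v ℓ * ((v ℓ)⁻¹ * t ℓ) = t ℓ; rw [← mul_assoc, mul_inv_cancel₀ (hvne ℓ hℓ), one_mul]
  have hu2 : ∀ ℓ < n, (u ℓ) ^ 2 = (t ℓ) ^ 2 / m ℓ := by
    intro ℓ hℓ
    show ((v ℓ)⁻¹ * t ℓ) ^ 2 = _; rw [mul_pow, inv_pow, hv2 ℓ hℓ, inv_mul_eq_div]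
  have key : ∀ ℓ₁ ℓ₂, ℓ₁ < ℓ₂ → ℓ₂ < n →
      (I ℓ₁ ℓ₂) ^ 2 = (v ℓ₂ * u ℓ₁ - v ℓ₁ * u ℓ₂) ^ 2 / M := by
    intro ℓ₁ ℓ₂ h12 h2n
    rw [hI ℓ₁ ℓ₂ h12 h2n]
    have h1 : Real.sqrt (m ℓ₂ / M) = v ℓ₂ / Real.sqrt M := Real.sqrt_div (hm ℓ₂ h2n).le M
    have h2 : Real.sqrt (m ℓ₁ / M) = v ℓ₁ / Real.sqrt M := Real.sqrt_div (hm ℓ₁ (h12.trans h2n)).le M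
    have hM2 : (Real.sqrt M) ^ 2 = M := Real.sq_sqrt hM.le
    rw [h1, h2, div_mul_eq_mul_div, div_mul_eq_mul_div, div_sub_div_same, div_pow, hM2]
  calc ∑ ℓ₂ ∈ Finset.range n, ∑ ℓ₁ ∈ Finset.range ℓ₂, (I ℓ₁ ℓ₂) ^ 2
      = (∑ ℓ₂ ∈ Finset.range n, ∑ ℓ₁ ∈ Finset.range ℓ₂, (v ℓ₂ * u ℓ₁ - v ℓ₁ * u ℓ₂) ^ 2) / M := by
        rw [Finset.sum_div]
        refine Finset.sum_congr rfl fun ℓ₂ h2 => ?_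
        rw [Finset.sum_div]
        refine Finset.sum_congr rfl fun ℓ₁ h1 => ?_
        exact key ℓ₁ ℓ₂ (Finset.mem_range.1 h1) (Finset.mem_range.1 h2)
    _ = ((∑ ℓ ∈ Finset.range n, (v ℓ)^2) * (∑ ℓ ∈ Finset.range n, (u ℓ)^2)
          - (∑ ℓ ∈ Finset.range n, v ℓ * u ℓ)^2) / M := by rw [lagrange_identity]
    _ = (M * (∑ ℓ ∈ Finset.range n, (t ℓ)^2 / m ℓ) - TB^2) / M := by
        rw [Finset.sum_congr rfl (fun ℓ hℓ => hv2 ℓ (Finset.mem_range.1 hℓ)),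
          Finset.sum_congr rfl (fun ℓ hℓ => hu2 ℓ (Finset.mem_range.1 hℓ)),
          Finset.sum_congr rfl (fun ℓ hℓ => hvu ℓ (Finset.mem_range.1 hℓ)), hsm, hst]
    _ = (∑ ℓ ∈ Finset.range n, (t ℓ)^2 / m ℓ) - TB^2 / M := by
        field_simp

/-! ### Auxiliary measure-theoretic lemmas -/

section MeasureLemmas

variable {X : Type*} [MeasurableSpace X]

lemma mul_indicator_one_eq (g : X → ℝ) (s : Set X) :
    (fun x => g x * s.indicator (fun _ => (1 : ℝ)) x) = s.indicator g := by
  funext x; by_cases h : x ∈ s <;> simp [h]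

lemma integrable_mul_indicator_one {ν : Measure X} {g : X → ℝ} (hg : Integrable g ν)
    {s : Set X} (hs : MeasurableSet s) :
    Integrable (fun x => g x * s.indicator (fun _ => (1 : ℝ)) x) ν := by
  rw [mul_indicator_one_eq]; exact hg.indicator hs

lemma ae_pairwise_not_mem (ν : Measure X) (s : Finset (Set X))
    (hnull : ∀ B ∈ s, ∀ B' ∈ s, B ≠ B' → ν (B ∩ B') = 0) :
    ∀ᵐ x ∂ν, ∀ B ∈ s, ∀ B' ∈ s, x ∈ B → x ∈ B' → B = B' := by
  have h1 : ∀ᵐ x ∂ν, ∀ B ∈ (↑s : Set (Set X)), ∀ B' ∈ (↑s : Set (Set X)),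
      x ∈ B → x ∈ B' → B = B' := by
    rw [MeasureTheory.ae_ball_iff s.countable_toSet]
    intro B hB
    rw [MeasureTheory.ae_ball_iff s.countable_toSet]
    intro B' hB'
    by_cases h : B = B'
    · filter_upwards with x _ _; exact h
    · have h0 : ν (B ∩ B') = 0 := hnull B (Finset.mem_coe.1 hB) B' (Finset.mem_coe.1 hB') h
      filter_upwards [measure_eq_zero_iff_ae_notMem.1 h0] with x hx hxB hxB'
      exact absurd ⟨hxB, hxB'⟩ hx
  filter_upwards [h1] with x hx B hB B' hB' hxB hxB'
  exact hx B (Finset.mem_coe.2 hB) B' (Finset.mem_coe.2 hB') hxB hxB'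

omit [MeasurableSpace X] in
lemma sum_eval_of_mem {s : Finset (Set X)} {x : X}
    (hx : ∀ B ∈ s, ∀ B' ∈ s, x ∈ B → x ∈ B' → B = B')
    {B : Set X} (hB : B ∈ s) (hxB : x ∈ B) (c : Set X → ℝ) :
    ∑ B' ∈ s, c B' * (B').indicator (fun _ => (1 : ℝ)) x = c B := by
  rw [Finset.sum_eq_single_of_mem B hB]
  · simp [hxB]
  · intro B' hB' hne
    by_cases h : x ∈ B'
    · exact absurd (hx B' hB' B hB h hxB) hne
    · simp [h]

lemma indicator_sum_children_ae (ν : Measure X) (n : ℕ) (C : ℕ → Set X) (B : Set X)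
    (hU : B = ⋃ ℓ ∈ Finset.range n, C ℓ)
    (hnull : ∀ ℓ₁ < n, ∀ ℓ₂ < n, ℓ₁ ≠ ℓ₂ → ν (C ℓ₁ ∩ C ℓ₂) = 0) :
    (fun x => B.indicator (fun _ => (1 : ℝ)) x) =ᵐ[ν]
      fun x => ∑ ℓ ∈ Finset.range n, (C ℓ).indicator (fun _ => (1 : ℝ)) x := by
  have h1 : ∀ᵐ x ∂ν, ∀ ℓ₁ ∈ (↑(Finset.range n) : Set ℕ), ∀ ℓ₂ ∈ (↑(Finset.range n) : Set ℕ),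
      ℓ₁ ≠ ℓ₂ → x ∉ C ℓ₁ ∩ C ℓ₂ := by
    rw [MeasureTheory.ae_ball_iff (Finset.range n).countable_toSet]
    intro ℓ₁ h₁
    rw [MeasureTheory.ae_ball_iff (Finset.range n).countable_toSet]
    intro ℓ₂ h₂
    by_cases h : ℓ₁ = ℓ₂
    · filter_upwards with x hne; exact absurd h hne
    · have h0 := hnull ℓ₁ (by simpa using h₁) ℓ₂ (by simpa using h₂) h
      filter_upwards [measure_eq_zero_iff_ae_notMem.1 h0] with x hx _
      exact hx
  filter_upwards [h1] with x hx
  by_cases hxB : x ∈ B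
  · have : x ∈ ⋃ ℓ ∈ Finset.range n, C ℓ := hU ▸ hxB
    simp only [Set.mem_iUnion] at this
    obtain ⟨ℓ, hℓ, hxC⟩ := this
    rw [Set.indicator_of_mem hxB, Finset.sum_eq_single_of_mem ℓ hℓ]
    · simp [hxC]
    · intro ℓ' hℓ' hne
      by_cases h : x ∈ C ℓ'
      · exact absurd ⟨h, hxC⟩ (hx ℓ' (Finset.mem_coe.2 hℓ') ℓ (Finset.mem_coe.2 hℓ) hne)
      · simp [h]
  · rw [Set.indicator_of_notMem hxB, eq_comm, Finset.sum_eq_zero]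
    intro ℓ hℓ
    have hsub : C ℓ ⊆ B := hU ▸ Set.subset_biUnion_of_mem hℓ
    exact Set.indicator_of_notMem (fun h => hxB (hsub h)) _

lemma integral_mul_indicator_children (ν : Measure X) (g : X → ℝ) (hg : Integrable g ν)
    (n : ℕ) (C : ℕ → Set X) (B : Set X)
    (hmeas : ∀ ℓ < n, MeasurableSet (C ℓ))
    (hU : B = ⋃ ℓ ∈ Finset.range n, C ℓ)
    (hnull : ∀ ℓ₁ < n, ∀ ℓ₂ < n, ℓ₁ ≠ ℓ₂ → ν (C ℓ₁ ∩ C ℓ₂) = 0) :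
    ∫ x, g x * B.indicator (fun _ => (1 : ℝ)) x ∂ν =
      ∑ ℓ ∈ Finset.range n, ∫ x, g x * (C ℓ).indicator (fun _ => (1 : ℝ)) x ∂ν := by
  have hae := indicator_sum_children_ae ν n C B hU hnull
  have h1 : ∫ x, g x * B.indicator (fun _ => (1 : ℝ)) x ∂ν =
      ∫ x, ∑ ℓ ∈ Finset.range n, g x * (C ℓ).indicator (fun _ => (1 : ℝ)) x ∂ν := by
    refine integral_congr_ae ?_
    filter_upwards [hae] with x hx
    rw [hx, Finset.mul_sum]
  rw [h1, integral_finset_sum]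
  intro ℓ hℓ
  exact integrable_mul_indicator_one hg (hmeas ℓ (Finset.mem_range.1 hℓ))

end MeasureLemmas

section GammaPsi

variable {X : Type*} [MeasureSpace X]

lemma integrable_mul_gamma {ν : Measure X} {g : X → ℝ} (hg : Integrable g ν)
    {C : Set X} (hC : MeasurableSet C) :
    Integrable (fun x => g x * gammaFn C x) ν := by
  have heq : (fun x => g x * gammaFn C x) =
      C.indicator (fun y => (Real.sqrt (volume C).toReal)⁻¹ * g y) := by
    funext x; by_cases h : x ∈ C <;> simp [gammaFn, h, mul_comm]
  rw [heq]
  exact (hg.const_mul _).indicator hC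

lemma integral_mul_gamma {ν : Measure X} {g : X → ℝ} {C : Set X} :
    ∫ x, g x * gammaFn C x ∂ν =
      (Real.sqrt (volume C).toReal)⁻¹ * ∫ x, g x * C.indicator (fun _ => (1 : ℝ)) x ∂ν := by
  rw [← MeasureTheory.integral_const_mul]
  congr 1; funext x
  by_cases h : x ∈ C <;> simp [gammaFn, h, mul_comm]

lemma integral_mul_psi {ν : Measure X} {g : X → ℝ} (hg : Integrable g ν)
    {B C C' : Set X} (hC : MeasurableSet C) (hC' : MeasurableSet C') :
    ∫ x, g x * psiFn B C C' x ∂ν =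
      Real.sqrt ((volume C').toReal / (volume B).toReal) *
          ((Real.sqrt (volume C).toReal)⁻¹ * ∫ x, g x * C.indicator (fun _ => (1 : ℝ)) x ∂ν) -
        Real.sqrt ((volume C).toReal / (volume B).toReal) *
          ((Real.sqrt (volume C').toReal)⁻¹ * ∫ x, g x * C'.indicator (fun _ => (1 : ℝ)) x ∂ν) := by
  have h1 : (fun x => g x * psiFn B C C' x) =
      fun x => Real.sqrt ((volume C').toReal / (volume B).toReal) * (g x * gammaFn C x) -
        Real.sqrt ((volume C).toReal / (volume B).toReal) * (g x * gammaFn C' x) := by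
    funext x; simp only [psiFn]; ring
  rw [h1, integral_sub ((integrable_mul_gamma hg hC).const_mul _)
    ((integrable_mul_gamma hg hC').const_mul _), MeasureTheory.integral_const_mul,
    MeasureTheory.integral_const_mul, integral_mul_gamma, integral_mul_gamma]

end GammaPsi

/-! ### Structure lemmas -/

section Structure

variable {X : Type*} [MeasureSpace X] [PseudoEMetricSpace X] {K : Set X}

lemma HierarchicalPartition.child_subset (P : HierarchicalPartition X K) {j : ℕ} {B : Set X}
    (hB : B ∈ P.part j) {ℓ : ℕ} (hℓ : ℓ < P.numChild j B) : P.child j B ℓ ⊆ B := by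
  conv_rhs => rw [P.child_union j B hB]
  exact Set.subset_biUnion_of_mem (Finset.mem_range.2 hℓ)

lemma HierarchicalPartition.subset_K (P : HierarchicalPartition X K) {j : ℕ} {B : Set X}
    (hB : B ∈ P.part j) : B ⊆ K := by
  rw [← P.cover j]
  exact Set.subset_biUnion_of_mem (u := fun B => B) hB

lemma HierarchicalPartition.reindex (P : HierarchicalPartition X K) (j : ℕ) (F : Set X → ℝ) :
    ∑ B ∈ P.part j, ∑ ℓ ∈ Finset.range (P.numChild j B), F (P.child j B ℓ) =
      ∑ C ∈ P.part (j + 1), F C := by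
  rw [Finset.sum_sigma']
  refine Finset.sum_bij (fun p _ => P.child j p.1 p.2) ?_ ?_ ?_ ?_
  · rintro ⟨B, ℓ⟩ hp
    rw [Finset.mem_sigma] at hp
    exact P.child_mem j B hp.1 ℓ (Finset.mem_range.1 hp.2)
  · rintro ⟨B, ℓ⟩ hp ⟨B', ℓ'⟩ hp' heq
    rw [Finset.mem_sigma] at hp hp'
    simp only [Finset.mem_range] at hp hp'
    have heq' : P.child j B ℓ = P.child j B' ℓ' := heq
    have hBB' : B = B' := by
      by_contra hne
      have hmem := P.child_mem j B hp.1 ℓ hp.2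
      have hsub : P.child j B ℓ ⊆ B ∩ B' := by
        refine Set.subset_inter (P.child_subset hp.1 hp.2) ?_
        rw [heq']; exact P.child_subset hp'.1 hp'.2
      have h0 : volume (P.child j B ℓ) = 0 :=
        le_antisymm (le_trans (measure_mono hsub) (P.null_inter j B hp.1 B' hp'.1 hne).le)
          zero_le
      exact absurd h0 (P.pos (j+1) _ hmem).ne'
    subst hBB'
    have hℓℓ' : ℓ = ℓ' := by
      by_contra hne
      exact P.child_ne j B hp.1 ℓ hp.2 ℓ' hp'.2 hne heq'
    subst hℓℓ'; rfl
  · intro C hC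
    by_contra hcon
    push_neg at hcon
    have hCne : ∀ B ∈ P.part j, ∀ ℓ < P.numChild j B, C ≠ P.child j B ℓ := by
      intro B hB ℓ hℓ heq
      exact hcon ⟨B, ℓ⟩ (Finset.mem_sigma.2 ⟨hB, Finset.mem_range.2 hℓ⟩) heq.symm
    have hsub : C ⊆ ⋃ B ∈ P.part j, ⋃ ℓ ∈ Finset.range (P.numChild j B), C ∩ P.child j B ℓ := by
      intro x hx
      have hxK : x ∈ K := P.subset_K hC hx
      rw [← P.cover j] at hxK
      simp only [Set.mem_iUnion] at hxK ⊢
      obtain ⟨B, hB, hxB⟩ := hxK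
      have : x ∈ ⋃ ℓ ∈ Finset.range (P.numChild j B), P.child j B ℓ :=
        (P.child_union j B hB) ▸ hxB
      simp only [Set.mem_iUnion] at this
      obtain ⟨ℓ, hℓ, hxC⟩ := this
      exact ⟨B, hB, ℓ, hℓ, hx, hxC⟩
    have h0 : volume C = 0 := by
      refine le_antisymm (le_trans (measure_mono hsub) ?_) zero_le
      refine le_trans (measure_biUnion_finset_le _ _) ?_
      rw [show (0 : ENNReal) = ∑ B ∈ P.part j, 0 by simp]
      refine Finset.sum_le_sum fun B hB => ?_
      refine le_trans (measure_biUnion_finset_le _ _) ?_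
      rw [show (0 : ENNReal) = ∑ ℓ ∈ Finset.range (P.numChild j B), 0 by simp]
      refine Finset.sum_le_sum fun ℓ hℓ => ?_
      rw [P.null_inter (j+1) C hC (P.child j B ℓ)
        (P.child_mem j B hB ℓ (Finset.mem_range.1 hℓ)) (hCne B hB ℓ (Finset.mem_range.1 hℓ))]
    exact absurd h0 (P.pos (j+1) C hC).ne'
  · intro p _; rfl

/-- Every element of `V_J` is a.e. equal to a finite linear combination of the indicators of
the blocks at level `J`. -/
lemma Vspace.exists_rep (P : HierarchicalPartition X K) (J : ℕ)
    (f : Lp ℝ 2 (volume.restrict K)) (hf : f ∈ Vspace P J) :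
    ∃ c : Set X → ℝ, (f : X → ℝ) =ᵐ[volume.restrict K]
      fun x => ∑ B ∈ P.part J, c B * B.indicator (fun _ => (1 : ℝ)) x := by
  classical
  refine Submodule.span_induction ?_ ?_ ?_ ?_ hf
  · rintro g ⟨B, hB, hae⟩
    refine ⟨fun S => if S = B then 1 else 0, hae.trans (Filter.Eventually.of_forall fun x => ?_)⟩
    show _ = ∑ B' ∈ P.part J, (if B' = B then (1 : ℝ) else 0) * B'.indicator (fun _ => (1 : ℝ)) x
    rw [Finset.sum_eq_single_of_mem B hB]
    · simp
    · intro B' hB' hne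
      simp [hne]
  · exact ⟨fun _ => 0, (Lp.coeFn_zero ℝ 2 _).trans (Filter.Eventually.of_forall fun x => by simp)⟩
  · rintro g₁ g₂ hg₁ hg₂ ⟨c₁, h₁⟩ ⟨c₂, h₂⟩
    refine ⟨c₁ + c₂, ?_⟩
    filter_upwards [Lp.coeFn_add g₁ g₂, h₁, h₂] with x hx h1x h2x
    simp only [hx, Pi.add_apply, h1x, h2x, ← Finset.sum_add_distrib]
    exact Finset.sum_congr rfl fun B _ => by simp [add_mul]
  · rintro a g hg ⟨c, hc⟩
    refine ⟨fun B => a * c B, ?_⟩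
    filter_upwards [Lp.coeFn_smul a g, hc] with x hx hcx
    simp only [hx, Pi.smul_apply, hcx, smul_eq_mul, Finset.mul_sum]
    exact Finset.sum_congr rfl fun B _ => by ring

end Structure

/-! ### Block quantities -/

/-- `∫_B f` with respect to the restricted measure. -/
noncomputable def Tint {X : Type*} [MeasureSpace X] (K : Set X) (f : X → ℝ) (B : Set X) : ℝ :=
  ∫ x, f x * B.indicator (fun _ => (1 : ℝ)) x ∂(volume.restrict K)

/-- `|B|` as a real number. -/
noncomputable def mVol {X : Type*} [MeasureSpace X] (B : Set X) : ℝ := (volume B).toReal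

/-- `∑_{B ∈ B_j} (∫_B f)² / |B|`. -/
noncomputable def Ssum {X : Type*} [MeasureSpace X] [PseudoEMetricSpace X] {K : Set X}
    (P : HierarchicalPartition X K) (f : X → ℝ) (j : ℕ) : ℝ :=
  ∑ B ∈ P.part j, (Tint K f B) ^ 2 / mVol B

section Aux

variable {X : Type*} [MeasureSpace X] [PseudoEMetricSpace X] {K : Set X}
  (P : HierarchicalPartition X K)

lemma aux_restrict_eq {j : ℕ} {B : Set X} (hB : B ∈ P.part j) :
    (volume.restrict K) B = volume B := by
  rw [Measure.restrict_apply (P.measurableSet j B hB),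
    Set.inter_eq_self_of_subset_left (P.subset_K hB)]

lemma aux_null (j : ℕ) : ∀ B ∈ P.part j, ∀ B' ∈ P.part j, B ≠ B' →
    (volume.restrict K) (B ∩ B') = 0 := by
  intro B hB B' hB' hne
  refine le_antisymm (le_trans ?_ (P.null_inter j B hB B' hB' hne).le) zero_le
  rw [Measure.restrict_apply ((P.measurableSet j B hB).inter (P.measurableSet j B' hB'))]
  exact measure_mono Set.inter_subset_left

lemma aux_mVol_pos (hKfin : volume K ≠ ⊤) {j : ℕ} {B : Set X} (hB : B ∈ P.part j) :
    0 < mVol B :=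
  ENNReal.toReal_pos (P.pos j B hB).ne'
    (((measure_mono (P.subset_K hB)).trans_lt (lt_top_iff_ne_top.2 hKfin)).ne)

lemma aux_Tint_one {j : ℕ} {B : Set X} (hB : B ∈ P.part j) :
    Tint K (fun _ => (1 : ℝ)) B = mVol B := by
  rw [Tint]
  simp only [one_mul]
  rw [MeasureTheory.integral_indicator_const (1 : ℝ) (P.measurableSet j B hB),
    measureReal_def, aux_restrict_eq P hB, smul_eq_mul, mul_one, mVol]

lemma aux_Tint_sum (f : X → ℝ) (hfint : Integrable f (volume.restrict K))
    {j : ℕ} {B : Set X} (hB : B ∈ P.part j) :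
    ∑ ℓ ∈ Finset.range (P.numChild j B), Tint K f (P.child j B ℓ) = Tint K f B := by
  have hCmem : ∀ ℓ < P.numChild j B, P.child j B ℓ ∈ P.part (j + 1) :=
    fun ℓ hℓ => P.child_mem j B hB ℓ hℓ
  exact (integral_mul_indicator_children (volume.restrict K) f hfint (P.numChild j B)
    (P.child j B) B
    (fun ℓ hℓ => P.measurableSet (j + 1) _ (hCmem ℓ hℓ))
    (P.child_union j B hB)
    (fun ℓ₁ h₁ ℓ₂ h₂ hne => aux_null P (j + 1) _ (hCmem ℓ₁ h₁) _ (hCmem ℓ₂ h₂)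
      (P.child_ne j B hB ℓ₁ h₁ ℓ₂ h₂ hne))).symm

lemma aux_key_block (f : X → ℝ) (hfint : Integrable f (volume.restrict K))
    (hKfin : volume K ≠ ⊤) {j : ℕ} {B : Set X} (hB : B ∈ P.part j) :
    ∑ ℓ₂ ∈ Finset.range (P.numChild j B), ∑ ℓ₁ ∈ Finset.range ℓ₂,
        (∫ x, f x * psiFn B (P.child j B ℓ₁) (P.child j B ℓ₂) x ∂(volume.restrict K)) ^ 2 =
      (∑ ℓ ∈ Finset.range (P.numChild j B),
          (Tint K f (P.child j B ℓ)) ^ 2 / mVol (P.child j B ℓ)) -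
        (Tint K f B) ^ 2 / mVol B := by
  haveI : IsFiniteMeasure (volume.restrict K) :=
    ⟨by rw [Measure.restrict_apply_univ]; exact lt_top_iff_ne_top.2 hKfin⟩
  have hCmem : ∀ ℓ < P.numChild j B, P.child j B ℓ ∈ P.part (j + 1) :=
    fun ℓ hℓ => P.child_mem j B hB ℓ hℓ
  have hsm : ∑ ℓ ∈ Finset.range (P.numChild j B), mVol (P.child j B ℓ) = mVol B := by
    rw [← aux_Tint_one P hB, ← aux_Tint_sum P (fun _ => (1 : ℝ)) (integrable_const 1) hB]
    exact Finset.sum_congr rfl fun ℓ hℓ =>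
      (aux_Tint_one P (hCmem ℓ (Finset.mem_range.1 hℓ))).symm
  refine block_sum_identity (P.numChild j B) (fun ℓ => mVol (P.child j B ℓ))
    (fun ℓ => Tint K f (P.child j B ℓ)) (mVol B) (Tint K f B)
    (fun ℓ₁ ℓ₂ => ∫ x, f x * psiFn B (P.child j B ℓ₁) (P.child j B ℓ₂) x ∂(volume.restrict K))
    (fun ℓ hℓ => aux_mVol_pos P hKfin (hCmem ℓ hℓ)) (aux_mVol_pos P hKfin hB) hsm
    (aux_Tint_sum P f hfint hB) ?_
  intro ℓ₁ ℓ₂ h12 h2n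
  show (∫ x, f x * psiFn B (P.child j B ℓ₁) (P.child j B ℓ₂) x ∂(volume.restrict K)) = _
  rw [integral_mul_psi hfint (P.measurableSet (j+1) _ (hCmem ℓ₁ (h12.trans h2n)))
    (P.measurableSet (j+1) _ (hCmem ℓ₂ h2n))]
  rfl

lemma aux_step (f : X → ℝ) (hfint : Integrable f (volume.restrict K))
    (hKfin : volume K ≠ ⊤) (j : ℕ) :
    ∑ B ∈ P.part j, ∑ ℓ₂ ∈ Finset.range (P.numChild j B), ∑ ℓ₁ ∈ Finset.range ℓ₂,
        (∫ x, f x * psiFn B (P.child j B ℓ₁) (P.child j B ℓ₂) x ∂(volume.restrict K)) ^ 2 =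
      Ssum P f (j + 1) - Ssum P f j := by
  rw [Finset.sum_congr rfl (fun B hB => aux_key_block P f hfint hKfin hB),
    Finset.sum_sub_distrib, P.reindex j (fun Ck => (Tint K f Ck) ^ 2 / mVol Ck)]
  rfl

end Aux

/-- the cut-off system `X({B_j}_{j=0}^J) = {φ₀} ∪ ⋃_{j<J} ⋃_{B∈B_j} Ψ_{j,B}`
is a tight frame with frame constant 1 for `V_J = span{χ_B : B ∈ B_J}`: for every `f ∈ V_J`,
`‖f‖² = |⟨f, φ₀⟩|² + ∑_{j<J} ∑_{B ∈ B_j} ∑_{ℓ₁ < ℓ₂ ≤ c_B} |⟨f, ψ_{j,B}^{(ℓ₁,ℓ₂)}⟩|²`. -/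
theorem cutoff_system_tight_frame_for_VJ
    {d : ℕ} (K : Set (Fin d → ℝ)) (hK : IsCompact K) (hKpos : 0 < volume K)
    (P : HierarchicalPartition (Fin d → ℝ) K) (J : ℕ)
    (f : Lp ℝ 2 (volume.restrict K)) (hf : f ∈ Vspace P J) :
    ‖f‖ ^ 2 =
      (∫ x, f x * gammaFn K x ∂(volume.restrict K)) ^ 2 +
        ∑ j ∈ Finset.range J, ∑ B ∈ P.part j,
          ∑ ℓ₂ ∈ Finset.range (P.numChild j B), ∑ ℓ₁ ∈ Finset.range ℓ₂,
            (∫ x, f x * psiFn B (P.child j B ℓ₁) (P.child j B ℓ₂) x ∂(volume.restrict K)) ^ 2 := by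
  classical
  have hKmeas : MeasurableSet K := hK.isClosed.measurableSet
  have hKfin : volume K ≠ ⊤ := hK.measure_lt_top.ne
  haveI : IsFiniteMeasure (volume.restrict K) :=
    ⟨by rw [Measure.restrict_apply_univ]; exact hK.measure_lt_top⟩
  have hfint : Integrable (f : (Fin d → ℝ) → ℝ) (volume.restrict K) :=
    (Lp.memLp f).integrable (by norm_num)
  have hKpart : K ∈ P.part 0 := by rw [P.root]; exact Finset.mem_singleton_self K
  -- level 0
  have hS0 : (∫ x, f x * gammaFn K x ∂(volume.restrict K)) ^ 2 = Ssum P (f : (Fin d → ℝ) → ℝ) 0 := by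
    rw [Ssum, show P.part 0 = {K} from P.root, Finset.sum_singleton, integral_mul_gamma, mul_pow,
      inv_pow, Real.sq_sqrt ENNReal.toReal_nonneg, inv_mul_eq_div]
    rfl
  -- level J
  obtain ⟨c, hc⟩ := Vspace.exists_rep P J f hf
  have hev := ae_pairwise_not_mem (volume.restrict K) (P.part J) (aux_null P J)
  have hTJ : ∀ B ∈ P.part J, Tint K (f : (Fin d → ℝ) → ℝ) B = c B * mVol B := by
    intro B hB
    have h1 : Tint K (f : (Fin d → ℝ) → ℝ) B =
        ∫ x, c B * B.indicator (fun _ => (1 : ℝ)) x ∂(volume.restrict K) := by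
      refine integral_congr_ae ?_
      filter_upwards [hc, hev] with x hfx hx
      by_cases hxB : x ∈ B
      · show f x * _ = _
        rw [hfx, sum_eval_of_mem hx hB hxB c]
      · show f x * _ = _
        simp [Set.indicator_of_notMem hxB]
    rw [h1, MeasureTheory.integral_const_mul,
      MeasureTheory.integral_indicator_const (1 : ℝ) (P.measurableSet J B hB),
      measureReal_def, aux_restrict_eq P hB, smul_eq_mul, mul_one, mVol]
  have hnorm : ‖f‖ ^ 2 = ∑ B ∈ P.part J, (c B) ^ 2 * mVol B := by
    have h0 : ‖f‖ ^ 2 = ∫ x, f x * f x ∂(volume.restrict K) := by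
      rw [← real_inner_self_eq_norm_sq, L2.inner_def]; rfl
    rw [h0]
    have h1 : ∫ x, f x * f x ∂(volume.restrict K) =
        ∫ x, ∑ B ∈ P.part J, (c B) ^ 2 * B.indicator (fun _ => (1 : ℝ)) x
          ∂(volume.restrict K) := by
      refine integral_congr_ae ?_
      filter_upwards [hc, hev, ae_restrict_mem hKmeas] with x hfx hx hxK
      rw [← P.cover J] at hxK
      simp only [Set.mem_iUnion] at hxK
      obtain ⟨B, hB, hxB⟩ := hxK
      show f x * f x = _
      rw [hfx, sum_eval_of_mem hx hB hxB c, sum_eval_of_mem hx hB hxB (fun B => (c B) ^ 2)]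
      ring
    rw [h1, integral_finset_sum]
    · refine Finset.sum_congr rfl fun B hB => ?_
      rw [MeasureTheory.integral_const_mul,
        MeasureTheory.integral_indicator_const (1 : ℝ) (P.measurableSet J B hB),
        measureReal_def, aux_restrict_eq P hB, smul_eq_mul, mul_one, mVol]
    · intro B hB
      exact integrable_mul_indicator_one (integrable_const _) (P.measurableSet J B hB)
  have hSJ : Ssum P (f : (Fin d → ℝ) → ℝ) J = ‖f‖ ^ 2 := by
    rw [Ssum, hnorm]
    refine Finset.sum_congr rfl fun B hB => ?_
    rw [hTJ B hB, mul_pow]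
    have hm := (aux_mVol_pos P hKfin hB).ne'
    field_simp
  -- telescoping and conclusion
  have htel : ∑ j ∈ Finset.range J,
      (Ssum P (f : (Fin d → ℝ) → ℝ) (j + 1) - Ssum P (f : (Fin d → ℝ) → ℝ) j) =
        Ssum P (f : (Fin d → ℝ) → ℝ) J - Ssum P (f : (Fin d → ℝ) → ℝ) 0 :=
    Finset.sum_range_sub _ J
  rw [Finset.sum_congr rfl (fun j _ => aux_step P (f : (Fin d → ℝ) → ℝ) hfint hKfin j), htel,
    hS0]
  linarith [hSJ]
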